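/- Feasibility Condition for non-overlapping time slots: if there exists an insertion position i ∈ Θ(ã^{w_ℓ}, A) such that λ_{w_ℓ}(A +_i ã^{w_ℓ}) − χ_{w_ℓ}(A, ã^{w_ℓ}) ≥ 0, where χ_{w_ℓ} = χ⁻_{w_ℓ} + χ⁺_{w_ℓ} is the loss time (entrance plus exit time) of window w_ℓ, then the insertion of ã^{w_ℓ} into A is time-feasible for at least one insertion position. -/

import Mathlib

/-- The tour obtained from `a` by inserting the new customer `x` between
positions `i` and `i+1`. -/
def insertAt {Loc : Type} (a : ℕ → Loc) (x : Loc) (i : ℕ) : ℕ → Loc :=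
  fun j => if j ≤ i then a j else if j = i + 1 then x else a (j - 1)

/-- The free time `λ_{w_ℓ}` of window `w_ℓ = [swl, ewl]` on a tour `b` whose
first/last indices inside `w_ℓ` are `f` and `l`. -/
noncomputable def freeTime {Loc : Type} (swl ewl : ℝ) (s : Loc → ℝ)
    (t : Loc → Loc → ℝ) (b : ℕ → Loc) (f l : ℕ) : ℝ :=
  (ewl - swl) - ∑ j ∈ Finset.Ico f l, (s (b j) + t (b j) (b (j + 1)))

/-- Feasibility Condition (non-overlapping time slots): if for some insertion
position `i ∈ Θ = [Θ⁻, Θ⁺]` we have `λ_{w_ℓ}(A +_i ã) − χ_{w_ℓ}(A, ã) ≥ 0`,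
where the loss time `χ_{w_ℓ} = χ⁻_{w_ℓ} + χ⁺_{w_ℓ}` is the sum of the entrance
time `χ⁻ = max(α_{a_f}, max_{i ∈ Θ, i ≤ f} α_{ã,i}) − s_{w_ℓ}` and the exit time
`χ⁺ = e_{w_ℓ} − min(β_{a_l}, min_{i ∈ Θ, i ≥ l} β_{ã,i})`, then the insertion of
`ã^{w_ℓ}` into `A` is time-feasible for at least one position. -/
theorem feasibility_condition
    {Loc : Type} (n : ℕ) (a : ℕ → Loc) (x : Loc)
    (wS wE : Loc → ℝ) (swl ewl : ℝ) (s : Loc → ℝ) (t : Loc → Loc → ℝ)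
    (start endT : ℝ) (α β : ℕ → ℝ) (θm θp f l : ℕ)
    (hs : ∀ c, 0 < s c) (ht : ∀ c d, 0 ≤ t c d)
    (hx : wS x = swl ∧ wE x = ewl) (hwl : swl < ewl)
    -- non-overlapping windows
    (hnov₁ : ∀ i j, 1 ≤ i → i ≤ n → 1 ≤ j → j ≤ n →
      (wS (a i) = wS (a j) ∧ wE (a i) = wE (a j)) ∨
      wE (a i) ≤ wS (a j) ∨ wE (a j) ≤ wS (a i))
    (hnov₂ : ∀ i, 1 ≤ i → i ≤ n →
      (wS (a i) = swl ∧ wE (a i) = ewl) ∨ wE (a i) ≤ swl ∨ ewl ≤ wS (a i))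
    -- earliest/latest arrival times of A and time-feasibility of A
    (hα0 : α 0 = start)
    (hαrec : ∀ j, j + 1 ≤ n →
      α (j + 1) = max (wS (a (j + 1))) (α j + s (a j) + t (a j) (a (j + 1))))
    (hαend : α (n + 1) = α n + s (a n) + t (a n) (a (n + 1)))
    (hβend : β (n + 1) = endT)
    (hβrec : ∀ j, 1 ≤ j → j ≤ n →
      β j = min (wE (a j)) (β (j + 1) - s (a j) - t (a j) (a (j + 1))))
    (hβ0 : β 0 = β 1 - t (a 0) (a 1))
    (hfeas : ∀ j, 1 ≤ j → j ≤ n → wS (a j) ≤ α j ∧ α j ≤ wE (a j))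
    (hret : α (n + 1) ≤ endT)
    -- f and l are the first/last indices of customers inside w_ℓ (nonempty block)
    (hf : IsLeast {i | 1 ≤ i ∧ i ≤ n ∧ swl ≤ wS (a i) ∧ wE (a i) ≤ ewl} f)
    (hl : IsGreatest {i | 1 ≤ i ∧ i ≤ n ∧ swl ≤ wS (a i) ∧ wE (a i) ≤ ewl} l)
    -- the candidate insertion positions Θ = [θm, θp]
    (hθm : IsLeast {i | i ≤ n ∧ swl + s x ≤ β (i + 1)} θm)
    (hθp : IsGreatest {i | i ≤ n ∧ α i + s (a i) ≤ ewl} θp) :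
    -- earliest/latest arrival times of ã when inserted after position i
    letI αx : ℕ → ℝ := fun i => max swl (α i + s (a i) + t (a i) x)
    letI βx : ℕ → ℝ := fun i => min ewl (β (i + 1) - s x - t x (a (i + 1)))
    -- entrance time χ⁻ and exit time χ⁺ of w_ℓ
    letI χm : ℝ :=
      sSup ({α f} ∪ {v | ∃ i, θm ≤ i ∧ i ≤ θp ∧ i ≤ f ∧ v = αx i}) - swl
    letI χp : ℝ :=
      ewl - sInf ({β l} ∪ {v | ∃ i, θm ≤ i ∧ i ≤ θp ∧ l ≤ i ∧ v = βx i})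
    -- if λ_{w_ℓ}(A +_i ã) − χ_{w_ℓ}(A, ã) ≥ 0 for some i ∈ Θ ...
    (∃ i fi li, θm ≤ i ∧ i ≤ θp ∧
      IsLeast {j | 1 ≤ j ∧ j ≤ n + 1 ∧
        swl ≤ wS (insertAt a x i j) ∧ wE (insertAt a x i j) ≤ ewl} fi ∧
      IsGreatest {j | 1 ≤ j ∧ j ≤ n + 1 ∧
        swl ≤ wS (insertAt a x i j) ∧ wE (insertAt a x i j) ≤ ewl} li ∧
      0 ≤ freeTime swl ewl s t (insertAt a x i) fi li - (χm + χp)) →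
    -- ... then some insertion position is time-feasible
    ∃ i, i ≤ n ∧
      max swl (α i + s (a i) + t (a i) x)
        ≤ min ewl (β (i + 1) - s x - t x (a (i + 1))) := by
  intro h
  obtain ⟨i, fi, li, hθmi, hiθp, hfi, hli, h0⟩ := h
  obtain ⟨⟨hf1, hfn, hfS, hfE⟩, hfmin⟩ := hf
  obtain ⟨⟨hl1, hln, hlS, hlE⟩, hlmax⟩ := hl
  obtain ⟨⟨hθmn, hθmβ⟩, hθmmin⟩ := hθm
  obtain ⟨⟨hθpn, hθpα⟩, hθpmax⟩ := hθp
  have hfl : f ≤ l := hlmax ⟨hf1, hfn, hfS, hfE⟩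
  -- monotonicity of α
  have hαstep : ∀ j, j + 1 ≤ n →
      α j + s (a j) + t (a j) (a (j + 1)) ≤ α (j + 1) := by
    intro j hj; rw [hαrec j hj]; exact le_max_right _ _
  have hαlt : ∀ j, j + 1 ≤ n → α j < α (j + 1) := by
    intro j hj
    have h1 := hs (a j); have h2 := ht (a j) (a (j + 1))
    have := hαstep j hj; linarith
  have hαmono : ∀ j k, j ≤ k → k ≤ n → α j ≤ α k := by
    intro j k hjk hkn
    induction k with
    | zero => have : j = 0 := by omega
              rw [this]
    | succ m ih =>
      rcases Nat.lt_or_ge j (m + 1) with hc | hc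
      · exact le_trans (ih (by omega) (by omega)) (le_of_lt (hαlt m (by omega)))
      · have : j = m + 1 := by omega
        rw [this]
  have hαsmono : ∀ j k, j < k → k ≤ n → α j < α k := by
    intro j k hjk hkn
    induction k with
    | zero => omega
    | succ m ih =>
      rcases Nat.lt_or_ge j m with hc | hc
      · exact lt_trans (ih (by omega) (by omega)) (hαlt m (by omega))
      · have : j = m := by omega
        rw [this]; exact hαlt m (by omega)
  -- monotonicity of β
  have hβle : ∀ j, 1 ≤ j → j ≤ n → β j ≤ β (j + 1) := by
    intro j h1 h2
    have h3 := hβrec j h1 h2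
    have h4 := hs (a j); have h5 := ht (a j) (a (j + 1))
    have h6 := min_le_right (wE (a j)) (β (j + 1) - s (a j) - t (a j) (a (j + 1)))
    linarith
  have hβmono : ∀ j k, 1 ≤ j → j ≤ k → k ≤ n + 1 → β j ≤ β k := by
    intro j k h1 hjk hkn
    induction k with
    | zero => omega
    | succ m ih =>
      rcases Nat.lt_or_ge j (m + 1) with hc | hc
      · exact le_trans (ih (by omega) (by omega)) (hβle m (by omega) (by omega))
      · have : j = m + 1 := by omega
        rw [this]
  have hαf : swl ≤ α f := le_trans hfS (hfeas f hf1 hfn).1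
  have hβlew : β l ≤ ewl := by
    have h1 := hβrec l hl1 hln
    have h2 := min_le_left (wE (a l)) (β (l + 1) - s (a l) - t (a l) (a (l + 1)))
    linarith
  -- θp ≤ l
  have hθpl : θp ≤ l := by
    by_contra hc
    push_neg at hc
    have hl1n : l + 1 ≤ n := by omega
    rcases hnov₂ (l + 1) (by omega) hl1n with ⟨h1, h2⟩ | hcase | hcase
    · have := hlmax ⟨by omega, hl1n, le_of_eq h1.symm, le_of_eq h2⟩; omega
    · have h5 := (hfeas (l + 1) (by omega) hl1n).2
      have h6 := hαlt l hl1n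
      have h7 := (hfeas l hl1 hln).1
      linarith [hlS]
    · have h5 := (hfeas (l + 1) (by omega) hl1n).1
      have h6 := hαmono (l + 1) θp (by omega) hθpn
      have h7 := hs (a θp)
      linarith
  -- f ≤ θm + 1
  have hθmf : f ≤ θm + 1 := by
    by_contra hc
    push_neg at hc
    have hj1 : 1 ≤ θm + 1 := by omega
    have hjn : θm + 1 ≤ n := by omega
    rcases hnov₂ (θm + 1) hj1 hjn with ⟨h1, h2⟩ | hcase | hcase
    · have := hfmin ⟨hj1, hjn, le_of_eq h1.symm, le_of_eq h2⟩; omega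
    · have h5 := hβrec (θm + 1) hj1 hjn
      have h6 := min_le_left (wE (a (θm + 1)))
        (β (θm + 1 + 1) - s (a (θm + 1)) - t (a (θm + 1)) (a (θm + 1 + 1)))
      have h7 := hs x
      linarith
    · have h5 := (hfeas (θm + 1) hj1 hjn).1
      have h6 := hαsmono (θm + 1) f (by omega) hfn
      have h7 := (hfeas f hf1 hfn).2
      linarith [hfE]
  have hif : f ≤ i + 1 := by omega
  have hil : i ≤ l := le_trans hiθp hθpl
  have hin : i ≤ n := le_trans hiθp hθpn
  -- interior customers have window exactly [swl, ewl]
  have P1 : ∀ k, f < k → k < l → wS (a k) = swl ∧ wE (a k) = ewl := by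
    intro k hk1 hk2
    have hk1' : 1 ≤ k := by omega
    have hkn : k ≤ n := by omega
    rcases hnov₂ k hk1' hkn with hcase | hcase | hcase
    · exact hcase
    · exfalso
      have h1 := (hfeas k hk1' hkn).2
      have h2 := hαsmono f k hk1 hkn
      linarith
    · exfalso
      have h1 := (hfeas k hk1' hkn).1
      have h2 := hαsmono k l hk2 hln
      have h3 := (hfeas l hl1 hln).2
      linarith [hlE]
  have hAset : ∀ k, f ≤ k → k ≤ l →
      1 ≤ k ∧ k ≤ n ∧ swl ≤ wS (a k) ∧ wE (a k) ≤ ewl := by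
    intro k h1 h2
    rcases eq_or_lt_of_le h1 with he | h1'
    · rw [← he]; exact ⟨hf1, hfn, hfS, hfE⟩
    rcases eq_or_lt_of_le h2 with he | h2'
    · rw [he]; exact ⟨hl1, hln, hlS, hlE⟩
    obtain ⟨e1, e2⟩ := P1 k h1' h2'
    exact ⟨by omega, by omega, le_of_eq e1.symm, le_of_eq e2⟩
  have hβew : ∀ m, f ≤ m → m ≤ l → β m ≤ ewl := by
    intro m h1 h2
    obtain ⟨m1, mn, _, mE⟩ := hAset m h1 h2
    have h3 := hβrec m m1 mn
    have h4 := min_le_left (wE (a m)) (β (m + 1) - s (a m) - t (a m) (a (m + 1)))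
    linarith
  have hKnn : ∀ j, (0:ℝ) ≤ s (a j) + t (a j) (a (j + 1)) := by
    intro j; have := hs (a j); have := ht (a j) (a (j + 1)); linarith
  have hSnn : ∀ k₁ k₂, (0:ℝ) ≤ ∑ j ∈ Finset.Ico k₁ k₂, (s (a j) + t (a j) (a (j + 1))) :=
    fun k₁ k₂ => Finset.sum_nonneg fun j _ => hKnn j
  -- telescoping of α
  have hαtel : ∀ k, f ≤ k → k ≤ n → (∀ m, f < m → m ≤ k → wS (a m) = swl) →
      α k = α f + ∑ j ∈ Finset.Ico f k, (s (a j) + t (a j) (a (j + 1))) := by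
    intro k
    induction k with
    | zero => intro hk _ _; have hf0 : f = 0 := by omega
              rw [hf0]; simp
    | succ m ih =>
      intro hk hmn hws
      rcases eq_or_lt_of_le hk with he | hlt
      · rw [← he]; simp
      · have hfm : f ≤ m := by omega
        have hm := ih hfm (by omega) (fun m' h1 h2 => hws m' h1 (by omega))
        have hge : swl ≤ α m := by
          have := hSnn f m; rw [hm]; linarith
        have hstep : α (m + 1) = α m + s (a m) + t (a m) (a (m + 1)) := by
          rw [hαrec m hmn, hws (m + 1) hlt (le_refl _), max_eq_right]
          have := hs (a m); have := ht (a m) (a (m + 1)); linarith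
        rw [hstep, hm, Finset.sum_Ico_succ_top hfm]; ring
  -- telescoping of β
  have hβtel : ∀ d k, k + d = l → (∀ m, k ≤ m → m < l → wE (a m) = ewl) → f ≤ k →
      β k = β l - ∑ j ∈ Finset.Ico k l, (s (a j) + t (a j) (a (j + 1))) := by
    intro d
    induction d with
    | zero => intro k hk _ _; have : k = l := by omega
              rw [this]; simp
    | succ m ih =>
      intro k hk hwE hfk
      have hkl : k < l := by omega
      have hk1 : 1 ≤ k := by omega
      have hkn : k ≤ n := by omega
      have hnext := ih (k + 1) (by omega) (fun m' h1 h2 => hwE m' (by omega) h2) (by omega)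
      have hβk1 : β (k + 1) ≤ ewl := hβew (k + 1) (by omega) (by omega)
      have hstep : β k = β (k + 1) - s (a k) - t (a k) (a (k + 1)) := by
        rw [hβrec k hk1 hkn, hwE k (le_refl _) hkl, min_eq_right]
        have := hs (a k); have := ht (a k) (a (k + 1)); linarith
      rw [hstep, hnext, Finset.sum_eq_sum_Ico_succ_bot hkl]; ring
  -- sSup / sInf bounds
  have hS1fin : ({α f} ∪ {v | ∃ i', θm ≤ i' ∧ i' ≤ θp ∧ i' ≤ f ∧
      v = max swl (α i' + s (a i') + t (a i') x)} : Set ℝ).Finite := by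
    apply Set.Finite.union (Set.finite_singleton _)
    apply Set.Finite.subset ((Set.finite_Icc θm θp).image
      (fun i' => max swl (α i' + s (a i') + t (a i') x)))
    rintro v ⟨i', h1, h2, _, rfl⟩
    exact ⟨i', ⟨h1, h2⟩, rfl⟩
  have hS2fin : ({β l} ∪ {v | ∃ i', θm ≤ i' ∧ i' ≤ θp ∧ l ≤ i' ∧
      v = min ewl (β (i' + 1) - s x - t x (a (i' + 1)))} : Set ℝ).Finite := by
    apply Set.Finite.union (Set.finite_singleton _)
    apply Set.Finite.subset ((Set.finite_Icc θm θp).image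
      (fun i' => min ewl (β (i' + 1) - s x - t x (a (i' + 1)))))
    rintro v ⟨i', h1, h2, _, rfl⟩
    exact ⟨i', ⟨h1, h2⟩, rfl⟩
  have hχm1 : α f ≤ sSup ({α f} ∪ {v | ∃ i', θm ≤ i' ∧ i' ≤ θp ∧ i' ≤ f ∧
      v = max swl (α i' + s (a i') + t (a i') x)}) :=
    le_csSup hS1fin.bddAbove (Set.mem_union_left _ rfl)
  have hχp1 : sInf ({β l} ∪ {v | ∃ i', θm ≤ i' ∧ i' ≤ θp ∧ l ≤ i' ∧
      v = min ewl (β (i' + 1) - s x - t x (a (i' + 1)))}) ≤ β l :=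
    csInf_le hS2fin.bddBelow (Set.mem_union_left _ rfl)
  -- insertAt facts
  have hins₁ : ∀ j, j ≤ i → insertAt a x i j = a j := fun j hj => if_pos hj
  have hins₂ : insertAt a x i (i + 1) = x := by
    simp [insertAt]
  have hins₃ : ∀ j, i + 2 ≤ j → insertAt a x i j = a (j - 1) := by
    intro j hj
    simp only [insertAt]
    rw [if_neg (by omega), if_neg (by omega)]
  -- identify fi and li
  have hfif : fi = f := by
    have hfmem : 1 ≤ f ∧ f ≤ n + 1 ∧ swl ≤ wS (insertAt a x i f) ∧
        wE (insertAt a x i f) ≤ ewl := by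
      rcases le_or_gt f i with hc | hc
      · rw [hins₁ f hc]; exact ⟨hf1, by omega, hfS, hfE⟩
      · have hfi1 : f = i + 1 := by omega
        rw [hfi1, hins₂]
        exact ⟨by omega, by omega, le_of_eq hx.1.symm, le_of_eq hx.2⟩
    have h1 : fi ≤ f := hfi.2 hfmem
    have h2 : f ≤ fi := by
      obtain ⟨g1, g2, g3, g4⟩ := hfi.1
      rcases le_or_gt fi i with hc | hc
      · rw [hins₁ fi hc] at g3 g4
        exact hfmin ⟨g1, by omega, g3, g4⟩
      · rcases eq_or_lt_of_le (Nat.succ_le_of_lt hc) with hc2 | hc2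
        · omega
        · rw [hins₃ fi (by omega)] at g3 g4
          have := hfmin ⟨by omega, by omega, g3, g4⟩
          omega
    omega
  have hlil : li = l + 1 := by
    have hlmem : 1 ≤ l + 1 ∧ l + 1 ≤ n + 1 ∧ swl ≤ wS (insertAt a x i (l + 1)) ∧
        wE (insertAt a x i (l + 1)) ≤ ewl := by
      rcases Nat.lt_or_ge i l with hc | hc
      · rw [hins₃ (l + 1) (by omega)]
        simp only [Nat.add_sub_cancel]
        exact ⟨by omega, by omega, hlS, hlE⟩
      · have hli1 : l + 1 = i + 1 := by omega
        rw [hli1, hins₂]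
        exact ⟨by omega, by omega, le_of_eq hx.1.symm, le_of_eq hx.2⟩
    have h1 : l + 1 ≤ li := hli.2 hlmem
    have h2 : li ≤ l + 1 := by
      obtain ⟨g1, g2, g3, g4⟩ := hli.1
      rcases le_or_gt li i with hc | hc
      · rw [hins₁ li hc] at g3 g4
        have := hlmax ⟨g1, by omega, g3, g4⟩
        omega
      · rcases eq_or_lt_of_le (Nat.succ_le_of_lt hc) with hc2 | hc2
        · omega
        · rw [hins₃ li (by omega)] at g3 g4
          have := hlmax ⟨by omega, by omega, g3, g4⟩
          omega
    omega
  rw [hfif, hlil] at h0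
  rw [freeTime] at h0
  beta_reduce at h0
  rcases (by omega : i + 1 = f ∨ (f ≤ i ∧ i < l) ∨ i = l) with hcL | ⟨hcf, hcl⟩ | hcR
  · -- Case L : insertion right before the block
    have hβfx : swl + s x ≤ β f := by
      have h1 := hβmono (θm + 1) f (by omega) (by omega) (by omega)
      linarith
    have hwEf : f < l → wE (a f) = ewl := by
      intro hfltl
      rcases hnov₂ f hf1 hfn with hcase | hcase | hcase
      · exact hcase.2
      · exfalso
        have h3 := hβrec f hf1 hfn
        have h4 := min_le_left (wE (a f)) (β (f + 1) - s (a f) - t (a f) (a (f + 1)))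
        have h5 := hs x
        linarith
      · have h5 := (hfeas f hf1 hfn).1
        have h6 := (hfeas f hf1 hfn).2
        exact le_antisymm hfE (by linarith)
    have hβf : β f = β l - ∑ j ∈ Finset.Ico f l, (s (a j) + t (a j) (a (j + 1))) := by
      apply hβtel (l - f) f (by omega) _ (le_refl f)
      intro m h1 h2
      rcases eq_or_lt_of_le h1 with he | h1'
      · rw [← he]; exact hwEf (by omega)
      · exact (P1 m h1' h2).2
    have hSb : ∑ j ∈ Finset.Ico f (l + 1),
          (s (insertAt a x i j) + t (insertAt a x i j) (insertAt a x i (j + 1)))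
        = s x + t x (a f) + ∑ j ∈ Finset.Ico f l, (s (a j) + t (a j) (a (j + 1))) := by
      rw [Finset.sum_eq_sum_Ico_succ_bot (by omega : f < l + 1)]
      have e1 : insertAt a x i f = x := by rw [← hcL]; exact hins₂
      have e2 : insertAt a x i (f + 1) = a f := by
        rw [hins₃ (f + 1) (by omega)]; congr 1 <;> omega
      rw [e1, e2]
      rw [Finset.sum_Ico_eq_sum_range, Finset.sum_Ico_eq_sum_range]
      have hlen : l + 1 - (f + 1) = l - f := by omega
      rw [hlen]
      have hsum : ∀ j ∈ Finset.range (l - f),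
          s (insertAt a x i (f + 1 + j)) +
            t (insertAt a x i (f + 1 + j)) (insertAt a x i (f + 1 + j + 1))
          = s (a (f + j)) + t (a (f + j)) (a (f + j + 1)) := by
        intro j hj
        have e3 : insertAt a x i (f + 1 + j) = a (f + j) := by
          rw [hins₃ _ (by omega)]; congr 1 <;> omega
        have e4 : insertAt a x i (f + 1 + j + 1) = a (f + j + 1) := by
          rw [hins₃ _ (by omega)]; congr 1 <;> omega
        rw [e3, e4]
      rw [Finset.sum_congr rfl hsum]
    rw [hSb] at h0
    have hmem : max swl (α i + s (a i) + t (a i) x) ∈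
        ({α f} ∪ {v | ∃ i', θm ≤ i' ∧ i' ≤ θp ∧ i' ≤ f ∧
          v = max swl (α i' + s (a i') + t (a i') x)} : Set ℝ) :=
      Set.mem_union_right _ ⟨i, hθmi, hiθp, by omega, rfl⟩
    have hχm2 := le_csSup hS1fin.bddAbove hmem
    refine ⟨i, hin, ?_⟩
    rw [hcL]
    have hβfe : β f ≤ ewl := hβew f le_rfl hfl
    have htx := ht x (a f)
    have hsx := hs x
    have hS := hSnn f l
    refine le_min ?_ ?_
    · linarith
    · linarith
  · -- Case M : insertion strictly inside the block
    have hA : α i = α f + ∑ j ∈ Finset.Ico f i, (s (a j) + t (a j) (a (j + 1))) := by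
      apply hαtel i hcf hin
      intro m h1 h2
      exact (P1 m h1 (by omega)).1
    have hB : β (i + 1) = β l - ∑ j ∈ Finset.Ico (i + 1) l,
        (s (a j) + t (a j) (a (j + 1))) := by
      apply hβtel (l - (i + 1)) (i + 1) (by omega) _ (by omega)
      intro m h1 h2
      exact (P1 m (by omega) h2).2
    have hSb : ∑ j ∈ Finset.Ico f (l + 1),
          (s (insertAt a x i j) + t (insertAt a x i j) (insertAt a x i (j + 1)))
        = (∑ j ∈ Finset.Ico f i, (s (a j) + t (a j) (a (j + 1))))
          + (s (a i) + t (a i) x) + (s x + t x (a (i + 1)))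
          + ∑ j ∈ Finset.Ico (i + 1) l, (s (a j) + t (a j) (a (j + 1))) := by
      rw [← Finset.sum_Ico_consecutive _ (hcf : f ≤ i) (by omega : i ≤ l + 1)]
      rw [Finset.sum_eq_sum_Ico_succ_bot (by omega : i < l + 1)]
      rw [Finset.sum_eq_sum_Ico_succ_bot (by omega : i + 1 < l + 1)]
      have e1 : insertAt a x i i = a i := hins₁ i le_rfl
      have e2 : insertAt a x i (i + 1) = x := hins₂
      have e3 : insertAt a x i (i + 1 + 1) = a (i + 1) := by
        rw [hins₃ _ (by omega)]; congr 1 <;> omega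
      rw [e1, e2, e3]
      have hfirst : ∀ j ∈ Finset.Ico f i,
          s (insertAt a x i j) + t (insertAt a x i j) (insertAt a x i (j + 1))
          = s (a j) + t (a j) (a (j + 1)) := by
        intro j hj
        simp only [Finset.mem_Ico] at hj
        rw [hins₁ j (by omega), hins₁ (j + 1) (by omega)]
      rw [Finset.sum_congr rfl hfirst]
      have hlast : ∑ j ∈ Finset.Ico (i + 1 + 1) (l + 1),
          (s (insertAt a x i j) + t (insertAt a x i j) (insertAt a x i (j + 1)))
          = ∑ j ∈ Finset.Ico (i + 1) l, (s (a j) + t (a j) (a (j + 1))) := by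
        rw [Finset.sum_Ico_eq_sum_range, Finset.sum_Ico_eq_sum_range]
        have hlen : l + 1 - (i + 1 + 1) = l - (i + 1) := by omega
        rw [hlen]
        apply Finset.sum_congr rfl
        intro j hj
        have e4 : insertAt a x i (i + 1 + 1 + j) = a (i + 1 + j) := by
          rw [hins₃ _ (by omega)]; congr 1 <;> omega
        have e5 : insertAt a x i (i + 1 + 1 + j + 1) = a (i + 1 + j + 1) := by
          rw [hins₃ _ (by omega)]; congr 1 <;> omega
        rw [e4, e5]
      rw [hlast]
      ring
    rw [hSb] at h0
    refine ⟨i, hin, ?_⟩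
    have hS1 := hSnn f i
    have hS2 := hSnn (i + 1) l
    have hsi := hs (a i)
    have hsx := hs x
    have ht1 := ht (a i) x
    have ht2 := ht x (a (i + 1))
    refine max_le (le_min hwl.le ?_) (le_min ?_ ?_)
    · linarith
    · linarith
    · linarith
  · -- Case R : insertion right after the block
    have hlθp : l ≤ θp := by omega
    have hwsl : wS (a l) = swl := by
      rcases hnov₂ l hl1 hln with hcase | hcase | hcase
      · exact hcase.1
      · rcases eq_or_lt_of_le hfl with he | hflt
        · have h1 := (hfeas l hl1 hln).1
          have h2 := (hfeas l hl1 hln).2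
          exact le_antisymm (by linarith) hlS
        · exfalso
          have h1 := (hfeas l hl1 hln).2
          have h2 := hαsmono f l hflt hln
          linarith
      · exfalso
        have h1 := (hfeas l hl1 hln).1
        have h2 := hαmono l θp hlθp hθpn
        have h3 := hs (a θp)
        linarith
    have hA : α l = α f + ∑ j ∈ Finset.Ico f l, (s (a j) + t (a j) (a (j + 1))) := by
      apply hαtel l hfl hln
      intro m h1 h2
      rcases eq_or_lt_of_le h2 with he | h2'
      · rw [he]; exact hwsl
      · exact (P1 m h1 h2').1
    have hSb : ∑ j ∈ Finset.Ico f (l + 1),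
          (s (insertAt a x i j) + t (insertAt a x i j) (insertAt a x i (j + 1)))
        = (∑ j ∈ Finset.Ico f l, (s (a j) + t (a j) (a (j + 1))))
          + (s (a l) + t (a l) x) := by
      rw [Finset.sum_Ico_succ_top hfl]
      have e1 : insertAt a x i l = a l := hins₁ l (by omega)
      have e2 : insertAt a x i (l + 1) = x := by rw [← hcR]; exact hins₂
      rw [e1, e2]
      have hfirst : ∀ j ∈ Finset.Ico f l,
          s (insertAt a x i j) + t (insertAt a x i j) (insertAt a x i (j + 1))
          = s (a j) + t (a j) (a (j + 1)) := by
        intro j hj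
        simp only [Finset.mem_Ico] at hj
        rw [hins₁ j (by omega), hins₁ (j + 1) (by omega)]
      rw [Finset.sum_congr rfl hfirst]
    rw [hSb] at h0
    have hmem : min ewl (β (l + 1) - s x - t x (a (l + 1))) ∈
        ({β l} ∪ {v | ∃ i', θm ≤ i' ∧ i' ≤ θp ∧ l ≤ i' ∧
          v = min ewl (β (i' + 1) - s x - t x (a (i' + 1)))} : Set ℝ) :=
      Set.mem_union_right _ ⟨l, by omega, hlθp, le_rfl, rfl⟩
    have hχp2 := csInf_le hS2fin.bddBelow hmem
    refine ⟨i, hin, ?_⟩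
    rw [hcR]
    have hS := hSnn f l
    have hsl := hs (a l)
    have htl := ht (a l) x
    refine max_le ?_ ?_
    · linarith
    · linarith
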